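/- Let 0 ≤ k < r and p ≥ 1, and set N = pk(r−k)/(2r). Then for any integers k₁,…,k_r summing to k, (p/(2r))∑_{α<β}(k_α−k_β)² ≥ N, with equality if and only if each k_α ∈ {0,1} (so exactly k of them equal 1). -/

import Mathlib

/-- Let `0 ≤ k < r` and `p ≥ 1`, and set `N = pk(r−k)/(2r)`. For any integers
`k₁, …, k_r` summing to `k`, one has `(p/(2r)) ∑_{α<β} (k_α − k_β)² ≥ N`, with equality
if and only if each `k_α ∈ {0, 1}` (so exactly `k` of them equal `1`). -/
theorem minimal_discriminant_bound (p r k : ℕ) (hp : 1 ≤ p) (hr : 1 ≤ r)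
    (hk : k < r) (kk : Fin r → ℤ) (hsum : ∑ α, kk α = (k : ℤ)) :
    (((p : ℚ) * k * (r - k)) / (2 * r) ≤
        ((p : ℚ) / (2 * r)) *
          ∑ x ∈ Finset.univ.filter (fun x : Fin r × Fin r => x.1 < x.2),
            ((kk x.1 : ℚ) - (kk x.2 : ℚ)) ^ 2) ∧
    ((((p : ℚ) / (2 * r)) *
          ∑ x ∈ Finset.univ.filter (fun x : Fin r × Fin r => x.1 < x.2),
            ((kk x.1 : ℚ) - (kk x.2 : ℚ)) ^ 2 =
        ((p : ℚ) * k * (r - k)) / (2 * r)) ↔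
      ∀ α, kk α = 0 ∨ kk α = 1) := by
  set f : Fin r → ℚ := fun α => (kk α : ℚ) with hf
  set A : ℚ := ∑ x ∈ Finset.univ.filter (fun x : Fin r × Fin r => x.1 < x.2),
      (f x.1 - f x.2) ^ 2 with hA
  have hfs : ∑ α, f α = (k : ℚ) := by
    rw [hf]; beta_reduce; exact_mod_cast hsum
  -- double sum identity
  have hdouble : 2 * A = ∑ α, ∑ β, (f α - f β)^2 := by
    rw [hA, ← Finset.sum_product']
    rw [← Finset.sum_filter_add_sum_filter_not (Finset.univ ×ˢ Finset.univ)
        (fun x : Fin r × Fin r => x.1 < x.2)]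
    have h1 : Finset.univ ×ˢ Finset.univ = (Finset.univ : Finset (Fin r × Fin r)) := by
      simp
    rw [h1]
    have h2 : ∑ x ∈ Finset.univ.filter (fun x : Fin r × Fin r => ¬ x.1 < x.2), (f x.1 - f x.2)^2
        = ∑ x ∈ Finset.univ.filter (fun x : Fin r × Fin r => x.1 < x.2), (f x.1 - f x.2)^2 := by
      rw [← Finset.sum_filter_add_sum_filter_not (Finset.univ.filter (fun x : Fin r × Fin r => ¬ x.1 < x.2)) (fun x => x.2 < x.1)]
      have h3 : (Finset.univ.filter (fun x : Fin r × Fin r => ¬ x.1 < x.2)).filter (fun x => x.2 < x.1)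
          = Finset.univ.filter (fun x : Fin r × Fin r => x.2 < x.1) := by
        ext x
        simp only [Finset.mem_filter, Finset.mem_univ, true_and]
        exact ⟨fun h => h.2, fun h => ⟨lt_asymm h, h⟩⟩
      rw [h3]
      have h4 : ∑ x ∈ (Finset.univ.filter (fun x : Fin r × Fin r => ¬ x.1 < x.2)).filter
          (fun x => ¬ x.2 < x.1), (f x.1 - f x.2)^2 = 0 := by
        apply Finset.sum_eq_zero
        intro x hx
        simp only [Finset.mem_filter, Finset.mem_univ, true_and, not_lt] at hx
        have : x.1 = x.2 := (le_antisymm hx.1 hx.2).symm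
        rw [this]; ring
      rw [h4, add_zero]
      exact Finset.sum_nbij' (fun x => Prod.swap x) (fun x => Prod.swap x)
        (by simp) (by simp) (by simp) (by simp)
        (by intro a _; rw [Prod.fst_swap, Prod.snd_swap]; ring)
    rw [h2]; ring
  -- expansion of the double sum
  have hexp : ∑ α, ∑ β, (f α - f β)^2 = 2 * ((r : ℚ) * (∑ α, f α ^ 2) - (k : ℚ)^2) := by
    have hrow : ∀ α, ∑ β, (f α - f β)^2
        = (r : ℚ) * f α ^ 2 - 2 * f α * (k : ℚ) + ∑ β, f β ^ 2 := by
      intro α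
      have : ∀ β, (f α - f β)^2 = f α ^ 2 - 2 * f α * f β + f β ^ 2 := fun β => by ring
      rw [Finset.sum_congr rfl (fun β _ => this β)]
      rw [Finset.sum_add_distrib, Finset.sum_sub_distrib, Finset.sum_const,
        ← Finset.mul_sum, hfs, Finset.card_univ, Fintype.card_fin]
      ring
    rw [Finset.sum_congr rfl (fun α _ => hrow α)]
    rw [Finset.sum_add_distrib, Finset.sum_sub_distrib, Finset.sum_const,
      ← Finset.mul_sum, ← Finset.sum_mul, ← Finset.mul_sum, hfs, Finset.card_univ, Fintype.card_fin,
      nsmul_eq_mul]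
    ring
  have hkey : 2 * A = 2 * ((r : ℚ) * (∑ α, f α ^ 2) - (k : ℚ)^2) := hdouble.trans hexp
  set Sz : ℤ := ∑ α, (kk α)^2 with hSz
  have hcast : ∑ α, f α ^ 2 = (Sz : ℚ) := by rw [hf, hSz]; push_cast; rfl
  have key : A = (r : ℚ) * (Sz : ℚ) - (k : ℚ)^2 := by rw [← hcast]; linarith
  have hterm : ∀ α, kk α ≤ kk α ^ 2 := by
    intro α
    rcases le_or_gt (kk α) 0 with h | h
    · nlinarith
    · nlinarith [Int.add_one_le_iff.mpr h]
  have hSk : (k : ℤ) ≤ Sz := by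
    rw [← hsum, hSz]; exact Finset.sum_le_sum (fun α _ => hterm α)
  have hSkQ : (k : ℚ) ≤ (Sz : ℚ) := by exact_mod_cast hSk
  have hp' : (0:ℚ) < p := by positivity
  have hr' : (0:ℚ) < r := by positivity
  have h2r : (0:ℚ) < 2 * r := by positivity
  have hSiff : Sz = (k : ℤ) ↔ ∀ α, kk α = 0 ∨ kk α = 1 := by
    constructor
    · intro h
      have hzero : ∑ α, (kk α ^ 2 - kk α) = 0 := by
        rw [Finset.sum_sub_distrib, hsum, ← hSz, h, sub_self]
      have := (Finset.sum_eq_zero_iff_of_nonneg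
        (fun α _ => by have := hterm α; omega)).mp hzero
      intro α
      have h0 := this α (Finset.mem_univ α)
      have : kk α * (kk α - 1) = 0 := by ring_nf; ring_nf at h0; omega
      rcases mul_eq_zero.mp this with h | h
      · left; exact h
      · right; omega
    · intro h
      have : ∀ α ∈ Finset.univ, kk α ^ 2 = kk α := by
        intro α _; rcases h α with h' | h' <;> rw [h'] <;> ring
      rw [hSz, Finset.sum_congr rfl this, hsum]
  constructor
  · rw [div_mul_eq_mul_div, key, div_le_div_iff₀ h2r h2r]
    have h0 : (p:ℚ) * r * (k:ℚ) ≤ (p:ℚ) * r * (Sz:ℚ) :=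
      mul_le_mul_of_nonneg_left hSkQ (by positivity)
    nlinarith [mul_le_mul_of_nonneg_right h0 (le_of_lt h2r)]
  · rw [div_mul_eq_mul_div, div_eq_div_iff (ne_of_gt h2r) (ne_of_gt h2r), ← hSiff]
    constructor
    · intro h
      have hA' : A = (k:ℚ) * ((r:ℚ) - k) := by
        have h1 : (p:ℚ) * A = (p:ℚ) * ((k:ℚ) * ((r:ℚ) - k)) := by
          apply mul_right_cancel₀ (ne_of_gt h2r); linear_combination h
        exact mul_left_cancel₀ (ne_of_gt hp') h1
      have h2 : (r:ℚ) * (Sz : ℚ) = (r:ℚ) * (k:ℚ) := by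
        linear_combination hA' - key
      have := mul_left_cancel₀ (ne_of_gt hr') h2
      exact_mod_cast this
    · intro h
      have hSzQ : (Sz : ℚ) = (k : ℚ) := by exact_mod_cast h
      rw [key, hSzQ]; ring
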